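/- Exact recovery under 1-NSP (sufficiency direction): Let (Ā, B̄, D̄) satisfy x_{i+1} = Ā x_i + B̄ u_i + d̄_i for i = 0,…,T−1 with S = supp(D̄), and suppose [X; U] satisfies the 1-NSP on (S, 𝒟⊖𝒟): for all (A,B) ≠ 0 with −AX−BU ∈ 𝒟⊖𝒟, ‖[A,B][X_S;U_S]‖_{2,col} < ‖[A,B][X_{S^c};U_{S^c}]‖_{2,col}. Then any feasible (A, B, D) with D ∈ 𝒟 and x_{i+1} = A x_i + B u_i + d_i for all i, with (A,B,D) ≠ (Ā,B̄,D̄), satisfies ‖D‖_{2,col} > ‖D̄‖_{2,col}. -/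
import Mathlib


/-- Euclidean (`ℓ2`) norm of a finitely indexed real vector. -/
noncomputable def nrm2 {ι : Type*} [Fintype ι] (v : ι → ℝ) : ℝ :=
  Real.sqrt (∑ j, v j ^ 2)

lemma nrm2_eq_norm {ι : Type*} [Fintype ι] (v : ι → ℝ) :
    nrm2 v = ‖(WithLp.equiv 2 (ι → ℝ)).symm v‖ := by
  rw [EuclideanSpace.norm_eq]
  simp [nrm2, sq_abs]

lemma nrm2_zero {ι : Type*} [Fintype ι] : nrm2 (0 : ι → ℝ) = 0 := by
  simp [nrm2]

lemma nrm2_triangle {ι : Type*} [Fintype ι] (a b : ι → ℝ) :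
    nrm2 (a + b) ≤ nrm2 a + nrm2 b := by
  simp only [nrm2_eq_norm]
  rw [show (WithLp.equiv 2 (ι → ℝ)).symm (a + b)
      = (WithLp.equiv 2 (ι → ℝ)).symm a + (WithLp.equiv 2 (ι → ℝ)).symm b from rfl]
  exact norm_add_le _ _

theorem stmt9 {n m T : ℕ}
    (x : Fin (T + 1) → Fin n → ℝ) (u : Fin T → Fin m → ℝ)
    (Abar : Matrix (Fin n) (Fin n) ℝ) (Bbar : Matrix (Fin n) (Fin m) ℝ)
    (Dbar : Fin T → Fin n → ℝ) (𝒟 : Set (Fin T → Fin n → ℝ))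
    (hDbar : Dbar ∈ 𝒟)
    (hdyn : ∀ i : Fin T,
      x i.succ = Abar.mulVec (x i.castSucc) + Bbar.mulVec (u i) + Dbar i)
    (S : Finset (Fin T)) (hS : ∀ i, i ∈ S ↔ Dbar i ≠ 0)
    (hNSP : ∀ (A : Matrix (Fin n) (Fin n) ℝ) (B : Matrix (Fin n) (Fin m) ℝ),
      ¬(A = 0 ∧ B = 0) →
      (∃ E ∈ 𝒟, ∃ F ∈ 𝒟,
        (fun i : Fin T => -(A.mulVec (x i.castSucc) + B.mulVec (u i))) = E - F) →
      ∑ i ∈ S, nrm2 (A.mulVec (x i.castSucc) + B.mulVec (u i)) <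
        ∑ i ∈ Sᶜ, nrm2 (A.mulVec (x i.castSucc) + B.mulVec (u i))) :
    ∀ (A : Matrix (Fin n) (Fin n) ℝ) (B : Matrix (Fin n) (Fin m) ℝ)
      (D : Fin T → Fin n → ℝ), D ∈ 𝒟 →
      (∀ i : Fin T, x i.succ = A.mulVec (x i.castSucc) + B.mulVec (u i) + D i) →
      ¬(A = Abar ∧ B = Bbar ∧ D = Dbar) →
      ∑ i, nrm2 (Dbar i) < ∑ i, nrm2 (D i) := by
  intro A B D hD hdyn' hne
  set ΔA := Abar - A with hΔA
  set ΔB := Bbar - B with hΔB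
  have key : ∀ i : Fin T,
      ΔA.mulVec (x i.castSucc) + ΔB.mulVec (u i) = D i - Dbar i := by
    intro i
    have h1 := hdyn i
    have h2 := hdyn' i
    have : Abar.mulVec (x i.castSucc) + Bbar.mulVec (u i) + Dbar i
        = A.mulVec (x i.castSucc) + B.mulVec (u i) + D i := by rw [← h1, ← h2]
    simp only [hΔA, hΔB, Matrix.sub_mulVec]
    funext j
    have := congrFun this j
    simp only [Pi.add_apply, Pi.sub_apply] at this ⊢
    linarith
  have hnz : ¬(ΔA = 0 ∧ ΔB = 0) := by
    rintro ⟨hA0, hB0⟩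
    have hA : A = Abar := by
      have := sub_eq_zero.mp hA0; exact this.symm
    have hB : B = Bbar := by
      have := sub_eq_zero.mp hB0; exact this.symm
    have hD' : D = Dbar := by
      funext i j
      have := congrFun (key i) j
      simp [hA0, hB0] at this
      linarith [this]
    exact hne ⟨hA, hB, hD'⟩
  have hfeas : ∃ E ∈ 𝒟, ∃ F ∈ 𝒟,
      (fun i : Fin T => -(ΔA.mulVec (x i.castSucc) + ΔB.mulVec (u i))) = E - F := by
    refine ⟨Dbar, hDbar, D, hD, ?_⟩
    funext i
    rw [key i]
    simp [sub_eq_neg_add]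
  have hlt := hNSP ΔA ΔB hnz hfeas
  -- rewrite via v i = D i - Dbar i
  have hvS : ∀ i : Fin T, nrm2 (ΔA.mulVec (x i.castSucc) + ΔB.mulVec (u i))
      = nrm2 (D i - Dbar i) := fun i => by rw [key i]
  have hSc : ∀ i ∈ Sᶜ, nrm2 (D i - Dbar i) = nrm2 (D i) := by
    intro i hi
    have : Dbar i = 0 := by
      by_contra h
      exact (Finset.mem_compl.mp hi) ((hS i).mpr h)
    simp [this]
  have hDbar_split : ∑ i, nrm2 (Dbar i) = ∑ i ∈ S, nrm2 (Dbar i) := by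
    rw [← Finset.sum_subset (Finset.subset_univ S)]
    intro i _ hi
    have : Dbar i = 0 := by
      by_contra h; exact hi ((hS i).mpr h)
    simp [this, nrm2_zero]
  have hD_split : ∑ i, nrm2 (D i) = ∑ i ∈ S, nrm2 (D i) + ∑ i ∈ Sᶜ, nrm2 (D i) :=
    (Finset.sum_add_sum_compl S _).symm
  have htri : ∑ i ∈ S, nrm2 (Dbar i)
      ≤ ∑ i ∈ S, nrm2 (D i) + ∑ i ∈ S, nrm2 (D i - Dbar i) := by
    rw [← Finset.sum_add_distrib]
    apply Finset.sum_le_sum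
    intro i _
    have : Dbar i = D i + -(D i - Dbar i) := by abel
    calc nrm2 (Dbar i) = nrm2 (D i + -(D i - Dbar i)) := by rw [← this]
      _ ≤ nrm2 (D i) + nrm2 (-(D i - Dbar i)) := nrm2_triangle _ _
      _ = nrm2 (D i) + nrm2 (D i - Dbar i) := by
          simp only [nrm2, Pi.neg_apply, Pi.sub_apply, neg_sq]
  have hlt' : ∑ i ∈ S, nrm2 (D i - Dbar i) < ∑ i ∈ Sᶜ, nrm2 (D i) := by
    calc ∑ i ∈ S, nrm2 (D i - Dbar i)
        = ∑ i ∈ S, nrm2 (ΔA.mulVec (x i.castSucc) + ΔB.mulVec (u i)) := by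
          exact Finset.sum_congr rfl fun i _ => (hvS i).symm
      _ < ∑ i ∈ Sᶜ, nrm2 (ΔA.mulVec (x i.castSucc) + ΔB.mulVec (u i)) := hlt
      _ = ∑ i ∈ Sᶜ, nrm2 (D i) := Finset.sum_congr rfl fun i hi => by
          rw [hvS i]; exact hSc i hi
  rw [hDbar_split, hD_split]
  linarith
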